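/- For n = 5 and α = 1/(2cos(π/5)), the maximum over assignments a : Fin 5 → {−1,1} of −∑ᵢ aᵢa_{i+1} − α²∑ᵢ aᵢ (indices mod 5) equals 3 + α², and this is strictly less than the quantum bound 3(1 + α²). -/

import Mathlib

open Real Finset

def kcbsWitness : ZMod 5 → ℝ := ![-1,-1,1,-1,1]

theorem kcbs5_classical_vs_quantum
    (α : ℝ) (hα : α = 1 / (2 * Real.cos (π / 5))) :
    IsGreatest
      {x : ℝ | ∃ a : ZMod 5 → ℝ, (∀ i, a i = 1 ∨ a i = -1) ∧
        x = -∑ i : ZMod 5, a i * a (i + 1) - α ^ 2 * ∑ i : ZMod 5, a i}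
      (3 + α ^ 2) ∧
    3 + α ^ 2 < 3 * (1 + α ^ 2) := by
  have h5 : (2:ℝ) ≤ Real.sqrt 5 := by
    nlinarith [Real.sq_sqrt (by norm_num : (0:ℝ) ≤ 5), Real.sqrt_nonneg 5]
  have hcos : Real.cos (π / 5) = (1 + Real.sqrt 5) / 4 := Real.cos_pi_div_five
  have hcpos : (3/4 : ℝ) ≤ Real.cos (π / 5) := by rw [hcos]; linarith
  have hαpos : 0 < α := by
    rw [hα]; positivity
  have hαle : α ≤ 2/3 := by
    rw [hα]
    rw [div_le_iff₀ (by linarith)]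
    linarith
  have hsq : α ^ 2 ≤ 1 := by nlinarith
  have hsqpos : 0 < α ^ 2 := by positivity
  have hsum : ∀ f : ZMod 5 → ℝ, ∑ i : ZMod 5, f i = f 0 + f 1 + f 2 + f 3 + f 4 := by
    intro f
    exact Fin.sum_univ_five f
  have e1 : ((0:ZMod 5)+1) = 1 := by decide
  have e2 : ((1:ZMod 5)+1) = 2 := by decide
  have e3 : ((2:ZMod 5)+1) = 3 := by decide
  have e4 : ((3:ZMod 5)+1) = 4 := by decide
  have e5 : ((4:ZMod 5)+1) = 0 := by decide
  refine ⟨⟨⟨kcbsWitness, fun i => by fin_cases i <;> simp [kcbsWitness], ?_⟩, ?_⟩, ?_⟩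
  · rw [hsum, hsum, e1, e2, e3, e4, e5]
    have w0 : kcbsWitness 0 = -1 := rfl
    have w1 : kcbsWitness 1 = -1 := rfl
    have w2 : kcbsWitness 2 = 1 := rfl
    have w3 : kcbsWitness 3 = -1 := rfl
    have w4 : kcbsWitness 4 = 1 := rfl
    rw [w0, w1, w2, w3, w4]; norm_num
  · rintro x ⟨a, ha, rfl⟩
    rw [hsum, hsum, e1, e2, e3, e4, e5]
    rcases ha 0 with h0 | h0 <;> rcases ha 1 with h1 | h1 <;> rcases ha 2 with h2 | h2 <;>
      rcases ha 3 with h3 | h3 <;> rcases ha 4 with h4 | h4 <;>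
      rw [h0, h1, h2, h3, h4] <;> linarith
  · nlinarith
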